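/- For every integer n ≥ 2, one has 2·∑_{ℓ=1}^{n-1} (ℓ+2)·binom(2n-ℓ-1, n)·2^{ℓ-1} = (n-1)·binom(2n, n). Equivalently, ∑_{ℓ=1}^{n-1} ((ℓ+2)/(n+1))·binom(2n-ℓ-1, n)·2^{ℓ-1} = ((n-1)/2)·C_n, where C_n = (1/(n+1))·binom(2n, n) is the n-th Catalan number. -/
import Mathlib


/-- For every `n ≥ 2`,
`2 * ∑_{ℓ=1}^{n-1} (ℓ+2) * choose (2n-ℓ-1) n * 2^(ℓ-1) = (n-1) * choose (2n) n`,
i.e. `∑_{ℓ=1}^{n-1} ((ℓ+2)/(n+1)) * choose (2n-ℓ-1) n * 2^(ℓ-1) = ((n-1)/2) * C_n`. -/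
theorem typeB_count_identity (n : ℕ) (hn : 2 ≤ n) :
    2 * ∑ ℓ ∈ Finset.Icc 1 (n - 1), (ℓ + 2) * (2 * n - ℓ - 1).choose n * 2 ^ (ℓ - 1)
      = (n - 1) * (2 * n).choose n := by
  have aux : ∀ m, m ≤ n - 1 →
      2 * ∑ ℓ ∈ Finset.Icc 1 m, (ℓ + 2) * (2 * n - ℓ - 1).choose n * 2 ^ (ℓ - 1)
        + (2 * n + 2) * 2 ^ m * (2 * n - m - 1).choose (n + 1)
        = (n - 1) * (2 * n).choose n := by
    intro m
    induction m with
    | zero =>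
      intro _
      -- base case: (2n+2) * C(2n-1, n+1) = (n-1) * C(2n, n)
      have h1 : (2 * n - 1).choose (n + 1) * (n + 1)
          = (2 * n - 1).choose n * (2 * n - 1 - n) :=
        Nat.choose_succ_right_eq _ _
      have e1 : 2 * n - 1 - n = n - 1 := by omega
      rw [e1] at h1
      have h2 : (2 * n).choose n = 2 * (2 * n - 1).choose n := by
        obtain ⟨k, rfl⟩ : ∃ k, n = k + 1 := ⟨n - 1, by omega⟩
        have e2 : 2 * (k + 1) = (2 * k + 1) + 1 := by ring
        have e3 : 2 * (k + 1) - 1 = 2 * k + 1 := by omega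
        rw [e3, e2, Nat.choose_succ_succ]
        have hs : (2 * k + 1).choose k = (2 * k + 1).choose (k + 1) := by
          rw [← Nat.choose_symm (show k + 1 ≤ 2 * k + 1 by omega)]
          congr 1
          omega
        simp only [Nat.succ_eq_add_one]
        omega
      have he : Finset.Icc 1 0 = (∅ : Finset ℕ) := Finset.Icc_eq_empty (by omega)
      rw [he]
      simp only [Finset.sum_empty, mul_zero, zero_add, pow_zero, mul_one]
      rw [h2]
      have e4 : 2 * n - 0 - 1 = 2 * n - 1 := by omega
      rw [e4]
      calc (2 * n + 2) * (2 * n - 1).choose (n + 1)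
          = 2 * ((2 * n - 1).choose (n + 1) * (n + 1)) := by ring
        _ = 2 * ((2 * n - 1).choose n * (n - 1)) := by rw [h1]
        _ = (n - 1) * (2 * (2 * n - 1).choose n) := by ring
    | succ m ih =>
      intro h
      have hm : m ≤ n - 1 := by omega
      rw [Finset.sum_Icc_succ_top (by omega : 1 ≤ m + 1)]
      have ihv := ih hm
      obtain ⟨d, rfl⟩ : ∃ d, n = m + 2 + d := ⟨n - m - 2, by omega⟩
      set K := 2 * (m + 2 + d) - m - 2 with hK
      have eK1 : 2 * (m + 2 + d) - (m + 1) - 1 = K := by omega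
      have eK2 : 2 * (m + 2 + d) - m - 1 = K + 1 := by omega
      rw [eK1]
      rw [eK2] at ihv
      have h1 : K.choose ((m + 2 + d) + 1) * ((m + 2 + d) + 1)
          = K.choose (m + 2 + d) * (K - (m + 2 + d)) :=
        Nat.choose_succ_right_eq _ _
      have e1 : K - (m + 2 + d) = d := by omega
      rw [e1] at h1
      have hp : (K + 1).choose ((m + 2 + d) + 1)
          = K.choose (m + 2 + d) + K.choose ((m + 2 + d) + 1) :=
        Nat.choose_succ_succ _ _
      set C := K.choose (m + 2 + d)
      set C' := K.choose ((m + 2 + d) + 1)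
      have key2 : (m + 3) * C + (2 * (m + 2 + d) + 2) * C'
          = ((m + 2 + d) + 1) * (C + C') := by
        calc (m + 3) * C + (2 * (m + 2 + d) + 2) * C'
            = (m + 3) * C + 2 * (C' * ((m + 2 + d) + 1)) := by ring
          _ = (m + 3) * C + 2 * (C * d) := by rw [h1]
          _ = (m + 3 + d) * C + C * d := by ring
          _ = (m + 3 + d) * C + C' * ((m + 2 + d) + 1) := by rw [h1]
          _ = ((m + 2 + d) + 1) * (C + C') := by ring
      have key : 2 * ((m + 1 + 2) * C * 2 ^ (m + 1 - 1))
          + (2 * (m + 2 + d) + 2) * 2 ^ (m + 1) * C'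
          = (2 * (m + 2 + d) + 2) * 2 ^ m * (K + 1).choose ((m + 2 + d) + 1) := by
        rw [hp, show m + 1 - 1 = m from rfl]
        calc 2 * ((m + 1 + 2) * C * 2 ^ m)
              + (2 * (m + 2 + d) + 2) * 2 ^ (m + 1) * C'
            = 2 ^ m * (2 * ((m + 3) * C + (2 * (m + 2 + d) + 2) * C')) := by ring
          _ = 2 ^ m * (2 * (((m + 2 + d) + 1) * (C + C'))) := by rw [key2]
          _ = (2 * (m + 2 + d) + 2) * 2 ^ m * (C + C') := by ring
      linarith [ihv, key]
  have h := aux (n - 1) le_rfl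
  have e : 2 * n - (n - 1) - 1 = n := by omega
  rw [e] at h
  simp only [Nat.choose_succ_self, mul_zero, add_zero] at h
  exact h
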